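/- Let n ≥ 2, let p ∈ (0,1), and let k be an integer with 1 ≤ k ≤ n satisfying k ≥ 1 + (n−1)p. Set i = ⌈ n·p·( k − 1 − (n−1)p ) / ( k − n·p ) ⌉. Then the maximum of P_θ(∑_{i=1}^n c_i ≥ k) over all pairwise independent distributions θ with all marginal probabilities equal to p equals ( (i−1)(i − 2·n·p) + n(n−1)p^2 ) / ( (k−i)^2 + (k−i) ), and this maximum is attained by some such distribution θ. -/

import Mathlib

open Finset

noncomputable section

/-- Probability that at least `k` of the `n` coordinates equal `1` under the pmf `θ` on `{0,1}^n`. -/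
def probGE (n : ℕ) (θ : (Fin n → Bool) → ℝ) (k : ℕ) : ℝ :=
  ∑ c ∈ Finset.univ.filter
      (fun c : Fin n → Bool => k ≤ (Finset.univ.filter (fun i => c i = true)).card), θ c

/-- Probability that all `n` coordinates equal `1` under the pmf `θ` on `{0,1}^n`. -/
def probAll (n : ℕ) (θ : (Fin n → Bool) → ℝ) : ℝ :=
  ∑ c ∈ Finset.univ.filter (fun c : Fin n → Bool => ∀ i, c i = true), θ c

/-- `θ` is a probability mass function on `{0,1}^n`. -/
def IsDist (n : ℕ) (θ : (Fin n → Bool) → ℝ) : Prop :=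
  (∀ c, 0 ≤ θ c) ∧ (∑ c, θ c = 1)

/-- Univariate marginal probability `P_θ(c_i = 1)`. -/
def Marg (n : ℕ) (θ : (Fin n → Bool) → ℝ) (i : Fin n) : ℝ :=
  ∑ c ∈ Finset.univ.filter (fun c : Fin n → Bool => c i = true), θ c

/-- Bivariate probability `P_θ(c_i = 1, c_j = 1)`. -/
def Biv (n : ℕ) (θ : (Fin n → Bool) → ℝ) (i j : Fin n) : ℝ :=
  ∑ c ∈ Finset.univ.filter (fun c : Fin n → Bool => c i = true ∧ c j = true), θ c

/-- `θ` is a pairwise independent distribution with marginal vector `p`. -/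
def PairwiseIndep (n : ℕ) (p : Fin n → ℝ) (θ : (Fin n → Bool) → ℝ) : Prop :=
  IsDist n θ ∧ (∀ i, Marg n θ i = p i) ∧
    (∀ i j : Fin n, i < j → Biv n θ i j = p i * p j)

namespace S13

def cnt {n : ℕ} (c : Fin n → Bool) : ℕ := (Finset.univ.filter (fun i => c i = true)).card


lemma sum_comp_equiv {n : ℕ} (e : Fin n ≃ Fin n) (F : (Fin n → Bool) → ℝ) :
    ∑ c : Fin n → Bool, F (fun x => c (e x)) = ∑ c : Fin n → Bool, F c := by
  exact Fintype.sum_bijective (Equiv.arrowCongr e.symm (Equiv.refl Bool))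
    (Equiv.bijective _) _ _ (fun c => rfl)

lemma cnt_comp_equiv {n : ℕ} (e : Fin n ≃ Fin n) (c : Fin n → Bool) :
    cnt (fun x => c (e x)) = cnt c := by
  unfold cnt
  apply Finset.card_bij (fun i _ => e i)
  · intro a ha; simp only [Finset.mem_filter, Finset.mem_univ, true_and] at *; exact ha
  · intro a _ b _ h; exact e.injective h
  · intro b hb; refine ⟨e.symm b, ?_, by simp⟩
    simp only [Finset.mem_filter, Finset.mem_univ, true_and] at *; simpa using hb

lemma marg_sum {n : ℕ} (θ : (Fin n → Bool) → ℝ) :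
    ∑ i, Marg n θ i = ∑ c, θ c * (cnt c : ℝ) := by
  unfold Marg
  simp_rw [Finset.sum_filter]
  rw [Finset.sum_comm]
  refine Finset.sum_congr rfl fun c _ => ?_
  rw [← Finset.sum_filter, Finset.sum_const, nsmul_eq_mul, mul_comm, cnt]

lemma biv_sum {n : ℕ} (θ : (Fin n → Bool) → ℝ) :
    ∑ x ∈ Finset.univ.offDiag, Biv n θ x.1 x.2
      = ∑ c, θ c * ((cnt c : ℝ) * ((cnt c : ℝ) - 1)) := by
  unfold Biv
  simp_rw [Finset.sum_filter]
  rw [Finset.sum_comm]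
  refine Finset.sum_congr rfl fun c _ => ?_
  rw [← Finset.sum_filter]
  have hset : (Finset.univ.offDiag.filter (fun x : Fin n × Fin n => c x.1 = true ∧ c x.2 = true))
      = (Finset.univ.filter (fun i => c i = true)).offDiag := by
    ext ⟨i, j⟩
    simp [Finset.mem_offDiag]
    tauto
  rw [hset, Finset.sum_const, nsmul_eq_mul, Finset.offDiag_card]
  have h1 : cnt c ≤ cnt c * cnt c := by nlinarith [Nat.zero_le (cnt c)]
  rw [show (Finset.univ.filter (fun i => c i = true)).card = cnt c from rfl]
  rw [Nat.cast_sub h1]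
  push_cast
  ring


lemma marg_symm {n : ℕ} (H : ℕ → ℝ) (i i' : Fin n) :
    Marg n (fun c => H (cnt c)) i = Marg n (fun c => H (cnt c)) i' := by
  unfold Marg
  rw [Finset.sum_filter, Finset.sum_filter]
  have := sum_comp_equiv (Equiv.swap i i')
    (fun c => if c i' = true then H (cnt c) else 0)
  rw [← this]
  refine Finset.sum_congr rfl fun c _ => ?_
  simp only [cnt_comp_equiv, Equiv.swap_apply_right]

lemma biv_comm {n : ℕ} (θ : (Fin n → Bool) → ℝ) (i j : Fin n) :
    Biv n θ i j = Biv n θ j i := by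
  unfold Biv
  congr 1
  ext c
  simp [and_comm]

lemma biv_reindex {n : ℕ} (H : ℕ → ℝ) (e : Fin n ≃ Fin n) (i j : Fin n) :
    Biv n (fun c => H (cnt c)) (e i) (e j) = Biv n (fun c => H (cnt c)) i j := by
  unfold Biv
  rw [Finset.sum_filter, Finset.sum_filter]
  have := sum_comp_equiv e.symm
    (fun c => if c (e i) = true ∧ c (e j) = true then H (cnt c) else 0)
  rw [← this]
  refine Finset.sum_congr rfl fun c _ => ?_
  simp only [cnt_comp_equiv, Equiv.symm_apply_apply]

lemma biv_symm {n : ℕ} (H : ℕ → ℝ) (i j i' j' : Fin n) (hij : i ≠ j) (hij' : i' ≠ j') :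
    Biv n (fun c => H (cnt c)) i j = Biv n (fun c => H (cnt c)) i' j' := by
  set j'' := Equiv.swap i i' j' with hj''
  have hj''i : j'' ≠ i := by
    rw [hj'']
    intro h
    have := (Equiv.swap i i').injective (h.trans (Equiv.swap_apply_right i i').symm)
    exact hij' this.symm
  have h1 : Biv n (fun c => H (cnt c)) i' j' = Biv n (fun c => H (cnt c)) i j'' := by
    have := biv_reindex H (Equiv.swap i i') i' j'
    rw [Equiv.swap_apply_right] at this
    rw [← hj''] at this
    exact this.symm
  have h2 : Biv n (fun c => H (cnt c)) i j'' = Biv n (fun c => H (cnt c)) i j := by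
    have := biv_reindex H (Equiv.swap j j'') i j''
    rw [Equiv.swap_apply_right] at this
    rw [Equiv.swap_apply_of_ne_of_ne hij hj''i.symm] at this
    exact this.symm
  rw [h1, h2]

def Nc (n m : ℕ) : ℕ := ((Finset.univ : Finset (Fin n → Bool)).filter (fun c => cnt c = m)).card

lemma Nc_pos {n m : ℕ} (h : m ≤ n) : 0 < Nc n m := by
  rw [Nc, Finset.card_pos]
  refine ⟨fun i => decide ((i : ℕ) < m), ?_⟩
  refine Finset.mem_filter.mpr ⟨Finset.mem_univ _, ?_⟩
  unfold cnt
  simp only [decide_eq_true_eq]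
  conv_rhs => rw [← Finset.card_range m]
  refine Finset.card_bij (fun i _ => (i : ℕ)) ?_ ?_ ?_
  · intro a ha; simp only [Finset.mem_filter, Finset.mem_univ, true_and] at ha
    simpa using ha
  · intro a _ b _ hab; exact Fin.val_injective hab
  · intro b hb
    simp only [Finset.mem_range] at hb
    exact ⟨⟨b, lt_of_lt_of_le hb h⟩, by simp [hb], rfl⟩

/-- uniform measure on the slice `cnt = m` -/
def u (n m : ℕ) : (Fin n → Bool) → ℝ := fun c => if cnt c = m then ((Nc n m : ℝ))⁻¹ else 0

lemma u_nonneg (n m : ℕ) (c : Fin n → Bool) : 0 ≤ u n m c := by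
  unfold u; split <;> positivity

lemma u_eq_H (n m : ℕ) : u n m = fun c => (fun s => if s = m then ((Nc n m : ℝ))⁻¹ else 0) (cnt c) := rfl

lemma u_total {n m : ℕ} (h : m ≤ n) : ∑ c, u n m c = 1 := by
  unfold u
  rw [← Finset.sum_filter, Finset.sum_const, nsmul_eq_mul, ← Nc]
  rw [mul_inv_cancel₀]
  exact_mod_cast (Nc_pos h).ne'

lemma u_mom1 {n m : ℕ} (h : m ≤ n) : ∑ c, u n m c * (cnt c : ℝ) = m := by
  have : ∀ c : Fin n → Bool, u n m c * (cnt c : ℝ) = (m : ℝ) * u n m c := by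
    intro c; unfold u; split
    · next hc => rw [hc]; ring
    · ring
  rw [Finset.sum_congr rfl fun c _ => this c, ← Finset.mul_sum, u_total h, mul_one]

lemma u_mom2 {n m : ℕ} (h : m ≤ n) :
    ∑ c, u n m c * ((cnt c : ℝ) * ((cnt c : ℝ) - 1)) = (m : ℝ) * ((m : ℝ) - 1) := by
  have : ∀ c : Fin n → Bool, u n m c * ((cnt c : ℝ) * ((cnt c : ℝ) - 1))
      = ((m : ℝ) * ((m : ℝ) - 1)) * u n m c := by
    intro c; unfold u; split
    · next hc => rw [hc]; ring
    · ring
  rw [Finset.sum_congr rfl fun c _ => this c, ← Finset.mul_sum, u_total h, mul_one]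

lemma u_marg {n m : ℕ} (hn : 0 < n) (h : m ≤ n) (i : Fin n) :
    Marg n (u n m) i = (m : ℝ) / n := by
  have hsym : ∀ i' : Fin n, Marg n (u n m) i' = Marg n (u n m) i := by
    intro i'; rw [u_eq_H]; exact marg_symm (fun s => if s = m then ((Nc n m : ℝ))⁻¹ else 0) i' i
  have hsum : ∑ i' : Fin n, Marg n (u n m) i' = (m : ℝ) := by
    rw [marg_sum]; exact u_mom1 h
  rw [Finset.sum_congr rfl fun i' _ => hsym i', Finset.sum_const, Finset.card_univ,
    Fintype.card_fin, nsmul_eq_mul] at hsum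
  field_simp
  rw [mul_comm] at hsum
  exact hsum

lemma u_biv {n m : ℕ} (hn : 2 ≤ n) (h : m ≤ n) {i j : Fin n} (hij : i ≠ j) :
    Biv n (u n m) i j = (m : ℝ) * ((m : ℝ) - 1) / ((n : ℝ) * ((n : ℝ) - 1)) := by
  have key : ∀ x : Fin n × Fin n, x ∈ (Finset.univ : Finset (Fin n)).offDiag →
      Biv n (u n m) x.1 x.2 = Biv n (u n m) i j := by
    rintro ⟨a, b⟩ hx
    simp only [Finset.mem_offDiag] at hx
    rw [u_eq_H]; exact biv_symm (fun s => if s = m then ((Nc n m : ℝ))⁻¹ else 0) a b i j hx.2.2 hij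
  have hsum := biv_sum (u n m)
  rw [Finset.sum_congr rfl key, Finset.sum_const, u_mom2 h, nsmul_eq_mul,
    Finset.offDiag_card, Finset.card_univ, Fintype.card_fin] at hsum
  have hcast : ((n * n - n : ℕ) : ℝ) = (n : ℝ) * ((n : ℝ) - 1) := by
    have : n ≤ n * n := Nat.le_mul_of_pos_left n (by omega)
    rw [Nat.cast_sub this]; push_cast; ring
  rw [hcast] at hsum
  have hne : (n : ℝ) * ((n : ℝ) - 1) ≠ 0 := by
    have h2 : (2 : ℝ) ≤ (n : ℝ) := by exact_mod_cast hn
    nlinarith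
  field_simp
  rw [mul_comm] at hsum
  have hn1 : (n : ℝ) - 1 ≠ 0 := by
    have h2 : (2 : ℝ) ≤ (n : ℝ) := by exact_mod_cast hn
    linarith
  rw [eq_div_iff hn1]
  linear_combination hsum

lemma u_probGE {n m k : ℕ} (h : m ≤ n) :
    (∑ c ∈ Finset.univ.filter
      (fun c : Fin n → Bool => k ≤ (Finset.univ.filter (fun i => c i = true)).card), u n m c)
      = if k ≤ m then 1 else 0 := by
  rw [Finset.sum_filter]
  have hpt : ∀ c : Fin n → Bool,
      (if k ≤ (Finset.univ.filter (fun i => c i = true)).card then u n m c else 0)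
        = (if k ≤ m then 1 else 0) * u n m c := by
    intro c
    have hcnt : (Finset.univ.filter (fun i => c i = true)).card = cnt c := rfl
    rw [hcnt]
    unfold u
    by_cases h2 : cnt c = m
    · rw [if_pos h2, h2]; split <;> simp
    · rw [if_neg h2]; simp
  rw [Finset.sum_congr rfl fun c _ => hpt c, ← Finset.mul_sum, u_total h, mul_one]

lemma mom1 {n : ℕ} {p : ℝ} {θ : (Fin n → Bool) → ℝ}
    (hm : ∀ i : Fin n, Marg n θ i = p) :
    ∑ c, θ c * (cnt c : ℝ) = (n : ℝ) * p := by
  rw [← marg_sum, Finset.sum_congr rfl fun i _ => hm i, Finset.sum_const,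
    Finset.card_univ, Fintype.card_fin, nsmul_eq_mul]

lemma mom2 {n : ℕ} {p : ℝ} {θ : (Fin n → Bool) → ℝ}
    (hb : ∀ i j : Fin n, i < j → Biv n θ i j = p * p) :
    ∑ c, θ c * ((cnt c : ℝ) * ((cnt c : ℝ) - 1)) = (n : ℝ) * ((n : ℝ) - 1) * p ^ 2 := by
  rw [← biv_sum]
  have key : ∀ x : Fin n × Fin n, x ∈ (Finset.univ : Finset (Fin n)).offDiag →
      Biv n θ x.1 x.2 = p ^ 2 := by
    rintro ⟨a, b⟩ hx
    simp only [Finset.mem_offDiag] at hx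
    rcases lt_or_gt_of_ne hx.2.2 with h | h
    · rw [hb a b h]; ring
    · rw [biv_comm, hb b a h]; ring
  rw [Finset.sum_congr rfl key, Finset.sum_const, nsmul_eq_mul, Finset.offDiag_card,
    Finset.card_univ, Fintype.card_fin]
  have hcast : ((n * n - n : ℕ) : ℝ) = (n : ℝ) * ((n : ℝ) - 1) := by
    have : n ≤ n * n := by nlinarith [Nat.zero_le n]
    rw [Nat.cast_sub this]; push_cast; ring
  rw [hcast]

lemma quad_mom {n : ℕ} {p : ℝ} {θ : (Fin n → Bool) → ℝ}
    (h1 : ∑ c, θ c = 1) (hm : ∀ i : Fin n, Marg n θ i = p)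
    (hb : ∀ i j : Fin n, i < j → Biv n θ i j = p * p) (x : ℝ) :
    ∑ c, θ c * (((cnt c : ℝ) - x) * ((cnt c : ℝ) - x + 1))
      = (x - 1) * (x - 2 * (n : ℝ) * p) + (n : ℝ) * ((n : ℝ) - 1) * p ^ 2 := by
  have e : ∀ c : Fin n → Bool, θ c * (((cnt c : ℝ) - x) * ((cnt c : ℝ) - x + 1))
      = θ c * ((cnt c : ℝ) * ((cnt c : ℝ) - 1)) + (2 - 2 * x) * (θ c * (cnt c : ℝ))
        + (x ^ 2 - x) * θ c := fun c => by ring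
  rw [Finset.sum_congr rfl fun c _ => e c, Finset.sum_add_distrib, Finset.sum_add_distrib,
    ← Finset.mul_sum, ← Finset.mul_sum, mom2 hb, mom1 hm, h1]
  ring

lemma quad_nonneg_int (a : ℤ) (s : ℕ) : (0 : ℝ) ≤ ((s : ℝ) - a) * ((s : ℝ) - a + 1) := by
  have h : (0 : ℤ) ≤ ((s : ℤ) - a) * ((s : ℤ) - a + 1) := by
    rcases le_or_gt 0 ((s : ℤ) - a) with h | h
    · nlinarith
    · nlinarith
  have h2 : (0 : ℝ) ≤ ((((s : ℤ) - a) * ((s : ℤ) - a + 1) : ℤ) : ℝ) := by exact_mod_cast h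
  push_cast at h2
  exact h2

def pm (n : ℕ) (p : ℝ) : (Fin n → Bool) → ℝ := fun c => ∏ i, (if c i then p else 1 - p)

lemma pm_nonneg {n : ℕ} {p : ℝ} (hp0 : 0 ≤ p) (hp1 : p ≤ 1) (c : Fin n → Bool) :
    0 ≤ pm n p c := by
  apply Finset.prod_nonneg
  intro i _
  split <;> linarith

lemma pm_total {n : ℕ} {p : ℝ} : ∑ c, pm n p c = 1 := by
  unfold pm
  rw [← Fintype.prod_sum (fun (i : Fin n) (b : Bool) => if b then p else 1 - p)]
  have : ∀ i : Fin n, (∑ b : Bool, if b then p else 1 - p) = 1 := by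
    intro i; rw [Fintype.sum_bool]; simp
  rw [Finset.prod_congr rfl fun i _ => this i, Finset.prod_const_one]

lemma pm_marg {n : ℕ} {p : ℝ} (i : Fin n) : Marg n (pm n p) i = p := by
  unfold Marg
  rw [Finset.sum_filter]
  have hpt : ∀ c : Fin n → Bool, (if c i = true then pm n p c else 0)
      = ∏ j, (if j = i then (if c j then p else 0) else (if c j then p else 1 - p)) := by
    intro c
    have hA : (∏ j, (if j = i then (if c j then p else 0) else (if c j then p else 1 - p)))
        = (if c i then p else 0) * ∏ j ∈ Finset.univ.erase i, (if c j then p else 1 - p) := by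
      rw [← Finset.mul_prod_erase Finset.univ _ (Finset.mem_univ i), if_pos rfl]
      congr 1
      refine Finset.prod_congr rfl fun j hj => ?_
      rw [if_neg (Finset.mem_erase.mp hj).1]
    have hB : pm n p c
        = (if c i then p else 1 - p) * ∏ j ∈ Finset.univ.erase i, (if c j then p else 1 - p) := by
      rw [pm, ← Finset.mul_prod_erase Finset.univ _ (Finset.mem_univ i)]
    by_cases hci : c i = true
    · rw [if_pos hci, hA, hB, hci]
      simp
    · rw [if_neg hci, hA]
      have : c i = false := by simpa using hci
      rw [this]
      simp
  rw [Finset.sum_congr rfl fun c _ => hpt c,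
    ← Fintype.prod_sum (fun (j : Fin n) (b : Bool) =>
      if j = i then (if b then p else 0) else (if b then p else 1 - p))]
  have : ∀ j : Fin n, (∑ b : Bool, if j = i then (if b then p else 0) else (if b then p else 1 - p))
      = if j = i then p else 1 := by
    intro j; by_cases hj : j = i <;> simp [hj]
  rw [Finset.prod_congr rfl fun j _ => this j]
  simp

lemma pm_biv {n : ℕ} {p : ℝ} {i j : Fin n} (hij : i ≠ j) : Biv n (pm n p) i j = p * p := by
  unfold Biv
  rw [Finset.sum_filter]
  have hji : j ∈ Finset.univ.erase i := Finset.mem_erase.mpr ⟨hij.symm, Finset.mem_univ j⟩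
  have hpt : ∀ c : Fin n → Bool, (if c i = true ∧ c j = true then pm n p c else 0)
      = ∏ l, (if l = i ∨ l = j then (if c l then p else 0) else (if c l then p else 1 - p)) := by
    intro c
    have hA : (∏ l, (if l = i ∨ l = j then (if c l then p else 0) else (if c l then p else 1 - p)))
        = (if c i then p else 0) * ((if c j then p else 0) *
            ∏ l ∈ (Finset.univ.erase i).erase j, (if c l then p else 1 - p)) := by
      rw [← Finset.mul_prod_erase Finset.univ _ (Finset.mem_univ i), if_pos (Or.inl rfl)]
      congr 1
      rw [← Finset.mul_prod_erase _ _ hji, if_pos (Or.inr rfl)]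
      congr 1
      refine Finset.prod_congr rfl fun l hl => ?_
      have h1 := (Finset.mem_erase.mp hl).1
      have h2 := (Finset.mem_erase.mp (Finset.mem_erase.mp hl).2).1
      rw [if_neg (by tauto)]
    have hB : pm n p c
        = (if c i then p else 1 - p) * ((if c j then p else 1 - p) *
            ∏ l ∈ (Finset.univ.erase i).erase j, (if c l then p else 1 - p)) := by
      rw [pm, ← Finset.mul_prod_erase Finset.univ _ (Finset.mem_univ i)]
      congr 1
      rw [← Finset.mul_prod_erase _ _ hji]
    by_cases hci : c i = true
    · by_cases hcj : c j = true
      · rw [if_pos ⟨hci, hcj⟩, hA, hB, hci, hcj]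
        simp
      · have : c j = false := by simpa using hcj
        rw [if_neg (by tauto), hA, this]
        simp
    · have : c i = false := by simpa using hci
      rw [if_neg (by tauto), hA, this]
      simp
  rw [Finset.sum_congr rfl fun c _ => hpt c,
    ← Fintype.prod_sum (fun (l : Fin n) (b : Bool) =>
      if l = i ∨ l = j then (if b then p else 0) else (if b then p else 1 - p))]
  have hfac : ∀ l : Fin n,
      (∑ b : Bool, if l = i ∨ l = j then (if b then p else 0) else (if b then p else 1 - p))
      = if l = i ∨ l = j then p else 1 := by
    intro l; by_cases hl : l = i ∨ l = j <;> simp [hl]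
  rw [Finset.prod_congr rfl fun l _ => hfac l]
  rw [← Finset.mul_prod_erase Finset.univ _ (Finset.mem_univ i), if_pos (Or.inl rfl),
    ← Finset.mul_prod_erase _ _ hji, if_pos (Or.inr rfl)]
  have : ∏ l ∈ (Finset.univ.erase i).erase j,
      (if l = i ∨ l = j then p else (1 : ℝ)) = 1 := by
    apply Finset.prod_eq_one
    intro l hl
    have h1 := (Finset.mem_erase.mp hl).1
    have h2 := (Finset.mem_erase.mp (Finset.mem_erase.mp hl).2).1
    rw [if_neg (by tauto)]
  rw [this]; ring


lemma ub {n k : ℕ} {p : ℝ} {θ : (Fin n → Bool) → ℝ}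
    (hpos : ∀ c, 0 ≤ θ c) (h1 : ∑ c, θ c = 1) (hm : ∀ i : Fin n, Marg n θ i = p)
    (hb : ∀ i j : Fin n, i < j → Biv n θ i j = p * p)
    (a : ℤ) (hak : (a : ℝ) ≤ (k : ℝ) - 1) :
    probGE n θ k ≤ (((a : ℝ) - 1) * ((a : ℝ) - 2 * (n : ℝ) * p) + (n : ℝ) * ((n : ℝ) - 1) * p ^ 2)
      / (((k : ℝ) - a) ^ 2 + ((k : ℝ) - a)) := by
  have hD : 0 < ((k : ℝ) - a) * ((k : ℝ) - a + 1) := by nlinarith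
  have step1 : probGE n θ k ≤ ∑ c, θ c *
      ((((cnt c : ℝ) - a) * ((cnt c : ℝ) - a + 1)) / (((k : ℝ) - a) * ((k : ℝ) - a + 1))) := by
    unfold probGE
    rw [Finset.sum_filter]
    apply Finset.sum_le_sum
    intro c _
    by_cases hc : k ≤ (Finset.univ.filter (fun i => c i = true)).card
    · rw [if_pos hc]
      have hs : (k : ℝ) ≤ (cnt c : ℝ) := by exact_mod_cast hc
      have hq : 1 ≤ (((cnt c : ℝ) - a) * ((cnt c : ℝ) - a + 1))
          / (((k : ℝ) - a) * ((k : ℝ) - a + 1)) := by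
        rw [le_div_iff₀ hD]
        nlinarith [mul_nonneg (sub_nonneg.mpr hs)
          (show (0 : ℝ) ≤ (cnt c : ℝ) + (k : ℝ) - 2 * a + 1 by nlinarith)]
      have := mul_le_mul_of_nonneg_left hq (hpos c)
      rw [mul_one] at this
      exact this
    · rw [if_neg hc]
      exact mul_nonneg (hpos c) (div_nonneg (quad_nonneg_int a (cnt c)) hD.le)
  refine le_trans step1 ?_
  have e : ∀ c : Fin n → Bool,
      θ c * ((((cnt c : ℝ) - a) * ((cnt c : ℝ) - a + 1)) / (((k : ℝ) - a) * ((k : ℝ) - a + 1)))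
      = (θ c * (((cnt c : ℝ) - a) * ((cnt c : ℝ) - a + 1)))
          / (((k : ℝ) - a) * ((k : ℝ) - a + 1)) := fun c => by ring
  rw [Finset.sum_congr rfl fun c _ => e c, ← Finset.sum_div, quad_mom h1 hm hb,
    show ((k : ℝ) - a) ^ 2 + ((k : ℝ) - a) = ((k : ℝ) - a) * ((k : ℝ) - a + 1) by ring]

lemma sum3 {n : ℕ} (f g h : (Fin n → Bool) → ℝ) (a b d : ℝ) (S : Finset (Fin n → Bool)) :
    ∑ c ∈ S, (a * f c + b * g c + d * h c)
      = a * ∑ c ∈ S, f c + b * ∑ c ∈ S, g c + d * ∑ c ∈ S, h c := by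
  rw [Finset.sum_add_distrib, Finset.sum_add_distrib, Finset.mul_sum, Finset.mul_sum,
    Finset.mul_sum]

lemma sum2 {n : ℕ} (f g : (Fin n → Bool) → ℝ) (a b : ℝ) (S : Finset (Fin n → Bool)) :
    ∑ c ∈ S, (a * f c + b * g c) = a * ∑ c ∈ S, f c + b * ∑ c ∈ S, g c := by
  rw [Finset.sum_add_distrib, Finset.mul_sum, Finset.mul_sum]

end S13

open S13 in
set_option maxHeartbeats 2000000 in
theorem stmt_13 (n k : ℕ) (hn : 2 ≤ n) (hk1 : 1 ≤ k) (hkn : k ≤ n)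
    (p : ℝ) (hp0 : 0 < p) (hp1 : p < 1)
    (hk' : 1 + ((n : ℝ) - 1) * p ≤ (k : ℝ))
    (ic : ℤ)
    (hic : ic = ⌈(n : ℝ) * p * ((k : ℝ) - 1 - ((n : ℝ) - 1) * p) / ((k : ℝ) - (n : ℝ) * p)⌉) :
    IsGreatest
      {x : ℝ | ∃ θ : (Fin n → Bool) → ℝ,
        PairwiseIndep n (fun _ => p) θ ∧ probGE n θ k = x}
      ((((ic : ℝ) - 1) * ((ic : ℝ) - 2 * (n : ℝ) * p) + (n : ℝ) * ((n : ℝ) - 1) * p ^ 2) /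
        (((k : ℝ) - ic) ^ 2 + ((k : ℝ) - ic))) := by
  have hn2 : (2 : ℝ) ≤ (n : ℝ) := by exact_mod_cast hn
  have hk1' : (1 : ℝ) ≤ (k : ℝ) := by exact_mod_cast hk1
  have hkn' : (k : ℝ) ≤ (n : ℝ) := by exact_mod_cast hkn
  have hD : 0 < (k : ℝ) - (n : ℝ) * p := by nlinarith
  set r : ℝ := (n : ℝ) * p * ((k : ℝ) - 1 - ((n : ℝ) - 1) * p) / ((k : ℝ) - (n : ℝ) * p)
    with hrdef
  have hnum0 : 0 ≤ (n : ℝ) * p * ((k : ℝ) - 1 - ((n : ℝ) - 1) * p) :=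
    mul_nonneg (by positivity) (by linarith)
  have hr0 : 0 ≤ r := div_nonneg hnum0 hD.le
  have hic0 : 0 ≤ ic := by rw [hic]; exact Int.ceil_nonneg hr0
  have hicr : r ≤ (ic : ℝ) := by rw [hic]; exact Int.le_ceil r
  have hicr1 : (ic : ℝ) < r + 1 := by rw [hic]; exact Int.ceil_lt_add_one r
  have hrk : r ≤ (k : ℝ) - 1 := by
    rw [hrdef, div_le_iff₀ hD]
    nlinarith [sq_nonneg ((k : ℝ) - 1 - ((n : ℝ) - 1) * p),
      mul_nonneg (show (0 : ℝ) ≤ (k : ℝ) - 1 by linarith) (sq_nonneg (p - 1)),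
      mul_nonneg (show (0 : ℝ) ≤ (n : ℝ) - (k : ℝ) by linarith) (sq_nonneg p)]
  have hickZ : ic ≤ (k : ℤ) - 1 := by
    rw [hic]
    refine Int.ceil_le.mpr ?_
    push_cast
    exact hrk
  have hick : (ic : ℝ) ≤ (k : ℝ) - 1 := by exact_mod_cast hickZ
  have hNum : 0 ≤ ((ic : ℝ) - 1) * ((ic : ℝ) - 2 * (n : ℝ) * p)
      + (n : ℝ) * ((n : ℝ) - 1) * p ^ 2 := by
    have hq := quad_mom (n := n) (θ := pm n p) pm_total (fun i => pm_marg i)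
      (fun i j h => pm_biv (ne_of_lt h)) (ic : ℝ)
    rw [← hq]
    exact Finset.sum_nonneg fun c _ =>
      mul_nonneg (pm_nonneg hp0.le hp1.le c) (quad_nonneg_int ic (cnt c))
  constructor
  · -- membership
    by_cases hic1 : 1 ≤ ic
    · -- three-point distribution on levels ic-1, ic, k
      obtain ⟨j2, hj2⟩ : ∃ j2 : ℕ, (j2 : ℤ) = ic := ⟨ic.toNat, Int.toNat_of_nonneg hic0⟩
      have hj2R : (j2 : ℝ) = (ic : ℝ) := by exact_mod_cast congrArg (fun z : ℤ => (z : ℝ)) hj2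
      have hj21 : 1 ≤ j2 := by omega
      have hj2k : j2 < k := by omega
      have hj1R : ((j2 - 1 : ℕ) : ℝ) = (ic : ℝ) - 1 := by
        rw [Nat.cast_sub hj21, hj2R]; norm_num
      have hj1k : ¬ (k ≤ j2 - 1) := by omega
      have hj2k' : ¬ (k ≤ j2) := by omega
      have hj1n : j2 - 1 ≤ n := by omega
      have hj2n : j2 ≤ n := by omega
      have hn0 : 0 < n := by omega
      have hd1 : (0 : ℝ) < (k : ℝ) - (ic : ℝ) + 1 := by linarith
      have hd2 : (0 : ℝ) < (k : ℝ) - (ic : ℝ) := by linarith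
      have hd1' : ((k : ℝ) - (ic : ℝ) + 1) ≠ 0 := hd1.ne'
      have hd2' : ((k : ℝ) - (ic : ℝ)) ≠ 0 := hd2.ne'
      have hd3 : (0 : ℝ) < ((k : ℝ) - (ic : ℝ)) ^ 2 + ((k : ℝ) - (ic : ℝ)) := by nlinarith
      have hd3' : (((k : ℝ) - (ic : ℝ)) ^ 2 + ((k : ℝ) - (ic : ℝ))) ≠ 0 := hd3.ne'
      set w1 : ℝ := ((n : ℝ) * ((n : ℝ) - 1) * p ^ 2 + (n : ℝ) * p
          - ((ic : ℝ) + (k : ℝ)) * ((n : ℝ) * p) + (ic : ℝ) * (k : ℝ))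
          / ((k : ℝ) - (ic : ℝ) + 1) with hw1def
      set w2 : ℝ := (((ic : ℝ) - 1 + (k : ℝ)) * ((n : ℝ) * p)
          - ((n : ℝ) * ((n : ℝ) - 1) * p ^ 2 + (n : ℝ) * p) - ((ic : ℝ) - 1) * (k : ℝ))
          / ((k : ℝ) - (ic : ℝ)) with hw2def
      set w3 : ℝ := (((ic : ℝ) - 1) * ((ic : ℝ) - 2 * (n : ℝ) * p)
          + (n : ℝ) * ((n : ℝ) - 1) * p ^ 2)
          / (((k : ℝ) - (ic : ℝ)) ^ 2 + ((k : ℝ) - (ic : ℝ))) with hw3def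
      have hw1 : 0 ≤ w1 := by
        rw [hw1def]
        apply div_nonneg _ hd1.le
        have he : (n : ℝ) * ((n : ℝ) - 1) * p ^ 2 + (n : ℝ) * p
            - ((ic : ℝ) + (k : ℝ)) * ((n : ℝ) * p) + (ic : ℝ) * (k : ℝ)
            = ((k : ℝ) - (n : ℝ) * p) * ((ic : ℝ) - r) := by
          rw [hrdef]; field_simp; ring
        rw [he]; exact mul_nonneg hD.le (by linarith)
      have hw2 : 0 ≤ w2 := by
        rw [hw2def]
        apply div_nonneg _ hd2.le
        have he : ((ic : ℝ) - 1 + (k : ℝ)) * ((n : ℝ) * p)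
            - ((n : ℝ) * ((n : ℝ) - 1) * p ^ 2 + (n : ℝ) * p) - ((ic : ℝ) - 1) * (k : ℝ)
            = ((k : ℝ) - (n : ℝ) * p) * (r + 1 - (ic : ℝ)) := by
          rw [hrdef]; field_simp; ring
        rw [he]; exact mul_nonneg hD.le (by linarith)
      have hw3 : 0 ≤ w3 := by
        rw [hw3def]; exact div_nonneg hNum hd3.le
      refine ⟨fun c => w1 * u n (j2 - 1) c + w2 * u n j2 c + w3 * u n k c, ⟨⟨?_, ?_⟩, ?_, ?_⟩, ?_⟩
      · intro c
        dsimp only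
        have a1 := u_nonneg n (j2 - 1) c
        have a2 := u_nonneg n j2 c
        have a3 := u_nonneg n k c
        have := mul_nonneg hw1 a1
        have := mul_nonneg hw2 a2
        have := mul_nonneg hw3 a3
        linarith
      · rw [show (∑ c, (w1 * u n (j2 - 1) c + w2 * u n j2 c + w3 * u n k c))
            = w1 * ∑ c, u n (j2 - 1) c + w2 * ∑ c, u n j2 c + w3 * ∑ c, u n k c
            from sum3 _ _ _ _ _ _ _]
        rw [u_total hj1n, u_total hj2n, u_total hkn]
        rw [hw1def, hw2def, hw3def]
        field_simp
        ring
      · intro i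
        show Marg n _ i = p
        have hlin : Marg n (fun c => w1 * u n (j2 - 1) c + w2 * u n j2 c + w3 * u n k c) i
            = w1 * Marg n (u n (j2 - 1)) i + w2 * Marg n (u n j2) i + w3 * Marg n (u n k) i :=
          sum3 _ _ _ _ _ _ _
        rw [hlin, u_marg hn0 hj1n i, u_marg hn0 hj2n i, u_marg hn0 hkn i, hj1R, hj2R]
        rw [hw1def, hw2def, hw3def]
        have hnR : ((n : ℝ)) ≠ 0 := by positivity
        field_simp
        ring
      · intro i j hij
        show Biv n _ i j = p * p
        have hlin : Biv n (fun c => w1 * u n (j2 - 1) c + w2 * u n j2 c + w3 * u n k c) i j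
            = w1 * Biv n (u n (j2 - 1)) i j + w2 * Biv n (u n j2) i j
              + w3 * Biv n (u n k) i j :=
          sum3 _ _ _ _ _ _ _
        rw [hlin, u_biv hn hj1n (ne_of_lt hij), u_biv hn hj2n (ne_of_lt hij),
          u_biv hn hkn (ne_of_lt hij), hj1R, hj2R]
        rw [hw1def, hw2def, hw3def]
        have hnR : ((n : ℝ)) * ((n : ℝ) - 1) ≠ 0 := by nlinarith
        have hnR' : (n : ℝ) - 1 ≠ 0 := by nlinarith
        field_simp
        ring
      · have hlin : probGE n (fun c => w1 * u n (j2 - 1) c + w2 * u n j2 c + w3 * u n k c) k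
            = w1 * probGE n (u n (j2 - 1)) k + w2 * probGE n (u n j2) k
              + w3 * probGE n (u n k) k :=
          sum3 _ _ _ _ _ _ _
        rw [hlin, show probGE n (u n (j2 - 1)) k = if k ≤ (j2 - 1) then 1 else 0 from
            u_probGE hj1n,
          show probGE n (u n j2) k = if k ≤ j2 then 1 else 0 from u_probGE hj2n,
          show probGE n (u n k) k = if k ≤ k then 1 else 0 from u_probGE hkn,
          if_neg hj1k, if_neg hj2k', if_pos le_rfl]
        rw [hw3def]
        ring
    · -- two-point case : ic = 0
      have hiceq : ic = 0 := by omega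
      have hα0 : ((ic : ℝ)) = 0 := by rw [hiceq]; norm_num
      have hrle : r ≤ 0 := by
        have h0 : (0 : ℤ) = ⌈r⌉ := by rw [← hiceq, hic]
        have := Int.ceil_le.mp (le_of_eq h0.symm)
        exact_mod_cast this
      have hre : r = 0 := le_antisymm hrle hr0
      have hke : (k : ℝ) - 1 = ((n : ℝ) - 1) * p := by
        rw [hrdef] at hre
        rcases div_eq_zero_iff.mp hre with h0 | h0
        · rcases mul_eq_zero.mp h0 with h1 | h1
          · exfalso; have : (0 : ℝ) < (n : ℝ) * p := by positivity
            rw [h1] at this; exact lt_irrefl 0 this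
          · linarith
        · exfalso; rw [h0] at hD; exact lt_irrefl 0 hD
      have hk0 : (0 : ℝ) < (k : ℝ) := by linarith
      have hnp0 : (0 : ℝ) < (n : ℝ) * p := by positivity
      have hwk : (n : ℝ) * p / (k : ℝ) ≤ 1 := by
        rw [div_le_one hk0]; linarith
      have hn0 : 0 < n := by omega
      have h0n : 0 ≤ n := by omega
      have hk0' : ¬ (k ≤ 0) := by omega
      refine ⟨fun c => (1 - (n : ℝ) * p / (k : ℝ)) * u n 0 c
        + ((n : ℝ) * p / (k : ℝ)) * u n k c, ⟨⟨?_, ?_⟩, ?_, ?_⟩, ?_⟩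
      · intro c
        dsimp only
        have a1 := u_nonneg n 0 c
        have a2 := u_nonneg n k c
        have b1 : (0 : ℝ) ≤ 1 - (n : ℝ) * p / (k : ℝ) := by linarith
        have b2 : (0 : ℝ) ≤ (n : ℝ) * p / (k : ℝ) := by positivity
        have := mul_nonneg b1 a1
        have := mul_nonneg b2 a2
        linarith
      · rw [show (∑ c, ((1 - (n : ℝ) * p / (k : ℝ)) * u n 0 c
            + ((n : ℝ) * p / (k : ℝ)) * u n k c))
            = (1 - (n : ℝ) * p / (k : ℝ)) * ∑ c, u n 0 c
              + ((n : ℝ) * p / (k : ℝ)) * ∑ c, u n k c from sum2 _ _ _ _ _]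
        rw [u_total (Nat.zero_le n), u_total hkn]
        ring
      · intro i
        show Marg n _ i = p
        have hlin : Marg n (fun c => (1 - (n : ℝ) * p / (k : ℝ)) * u n 0 c
            + ((n : ℝ) * p / (k : ℝ)) * u n k c) i
            = (1 - (n : ℝ) * p / (k : ℝ)) * Marg n (u n 0) i
              + ((n : ℝ) * p / (k : ℝ)) * Marg n (u n k) i :=
          sum2 _ _ _ _ _
        rw [hlin, u_marg hn0 (Nat.zero_le n) i, u_marg hn0 hkn i]
        push_cast
        field_simp
        ring
      · intro i j hij
        show Biv n _ i j = p * p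
        have hlin : Biv n (fun c => (1 - (n : ℝ) * p / (k : ℝ)) * u n 0 c
            + ((n : ℝ) * p / (k : ℝ)) * u n k c) i j
            = (1 - (n : ℝ) * p / (k : ℝ)) * Biv n (u n 0) i j
              + ((n : ℝ) * p / (k : ℝ)) * Biv n (u n k) i j :=
          sum2 _ _ _ _ _
        rw [hlin, u_biv hn (Nat.zero_le n) (ne_of_lt hij), u_biv hn hkn (ne_of_lt hij)]
        push_cast
        rw [hke]
        have hnR : ((n : ℝ)) - 1 ≠ 0 := by nlinarith
        field_simp
        ring
      · have hlin : probGE n (fun c => (1 - (n : ℝ) * p / (k : ℝ)) * u n 0 c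
            + ((n : ℝ) * p / (k : ℝ)) * u n k c) k
            = (1 - (n : ℝ) * p / (k : ℝ)) * probGE n (u n 0) k
              + ((n : ℝ) * p / (k : ℝ)) * probGE n (u n k) k :=
          sum2 _ _ _ _ _
        rw [hlin, show probGE n (u n 0) k = if k ≤ 0 then 1 else 0 from u_probGE (Nat.zero_le n),
          show probGE n (u n k) k = if k ≤ k then 1 else 0 from u_probGE hkn,
          if_neg hk0', if_pos le_rfl]
        rw [hα0]
        have hkne : (k : ℝ) ≠ 0 := hk0.ne'
        field_simp
        linear_combination ((n : ℝ) * p * (k : ℝ)) * hke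

  · rintro x ⟨θ, hPI, rfl⟩
    obtain ⟨⟨hpos, h1⟩, hm, hb⟩ := hPI
    exact ub hpos h1 (fun i => hm i) (fun i j h => hb i j h) ic hick
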